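/- Let λ be a k-strict partition contained in an m × (n+k) rectangle and μ a k-strict partition with λ → μ (parameter K = 2k). Define 𝔸̂ = 𝔸 ∪ {[m', k]} if λ_{m'} = k < μ_{m'} (where m' = ℓ_k(λ) + 1), and 𝔸̂ = 𝔸 otherwise. Then N̂(λ, μ), defined as N(λ,μ)+1 if λ has positive type and μ does not and N(λ,μ) otherwise, equals the number of distinguished boxes B ∈ 𝔸̂ that are rightmost distinguished boxes in their connected component (a box is distinguished if the box directly to its left is not in 𝔸̂). -/

import Mathlib

/-!
STATEMENT 19.  Let `K = 2k` (`k ≥ 1`), let `λ` be a `k`-strict partition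
contained in an `m × (n+k)` rectangle and `μ` a `k`-strict partition with
`λ → μ`.  Let `m' = ℓ_k(λ) + 1` and let `𝔸̂ = 𝔸 ∪ {[m',k]}` if
`λ_{m'} = k < μ_{m'}`, `𝔸̂ = 𝔸` otherwise.  Then
`N̂(λ,μ)` (which is `N(λ,μ)+1` if `λ` has positive type and `μ` does not, and
`N(λ,μ)` otherwise) equals the number of boxes of `𝔸̂` that are distinguished
(no box of `𝔸̂` directly to their left) and optional (rightmost distinguished
box in their connected component).  Conventions as in Statement 17.
-/

namespace Stmt19

def IsPartition (f : ℕ → ℕ) : Prop :=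
  (∀ i j : ℕ, 1 ≤ i → i ≤ j → f j ≤ f i) ∧ ∃ M : ℕ, ∀ i : ℕ, M ≤ i → f i = 0

def IsKStrict (k : ℕ) (f : ℕ → ℕ) : Prop :=
  ∀ i j : ℕ, 1 ≤ i → i < j → k < f i → f i ≠ f j

def diagram (f : ℕ → ℕ) : Set (ℕ × ℕ) :=
  {b | 1 ≤ b.1 ∧ 1 ≤ b.2 ∧ b.2 ≤ f b.1}

noncomputable def size (f : ℕ → ℕ) : ℕ := (diagram f).ncard

noncomputable def colLen (f : ℕ → ℕ) (c : ℕ) : ℕ :=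
  {r : ℕ | 1 ≤ r ∧ c ≤ f r}.ncard

def Krel (k K : ℕ) (b b' : ℕ × ℕ) : Prop :=
  b.2 ≤ k ∧ k < b'.2 ∧ b.2 + b'.2 + b'.1 = K + 1 + b.1

def PieriArrow (k K : ℕ) (lam mu : ℕ → ℕ) : Prop :=
  (∃ nu : ℕ → ℕ, IsPartition nu ∧
    (∀ r : ℕ, 1 ≤ r → nu r ≤ lam r ∧ lam r ≤ nu r + 1 ∧ (nu r < lam r → lam r ≤ k)) ∧
    (∀ r : ℕ, 1 ≤ r → nu r ≤ mu r ∧ mu (r + 1) ≤ nu r)) ∧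
  (∀ c : ℕ, 1 ≤ c → c ≤ k → 0 < colLen lam c → colLen mu c = colLen lam c →
    {b : ℕ × ℕ | b ∈ diagram mu \ diagram lam ∧
      Krel k K (colLen lam c, c) b}.ncard ≤ 1) ∧
  (∀ c : ℕ, 1 ≤ c → c ≤ k → colLen mu c < colLen lam c →
    ∃ R : ℕ,
      (∀ b : ℕ × ℕ, b ∈ diagram lam \ diagram mu → b.2 = c →
        (∃! b' : ℕ × ℕ, b' ∈ diagram mu \ diagram lam ∧ Krel k K b b') ∧
        (∀ b' : ℕ × ℕ, b' ∈ diagram mu \ diagram lam → Krel k K b b' → b'.1 = R)) ∧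
      ((∃! b' : ℕ × ℕ, b' ∈ diagram mu \ diagram lam ∧
          Krel k K (colLen mu c, c) b') ∧
        (∀ b' : ℕ × ℕ, b' ∈ diagram mu \ diagram lam →
          Krel k K (colLen mu c, c) b' → b'.1 = R)))

def Mentioned (k K : ℕ) (lam mu : ℕ → ℕ) (b : ℕ × ℕ) : Prop :=
  ∃ c : ℕ, 1 ≤ c ∧ c ≤ k ∧
    ((colLen mu c = colLen lam c ∧ 0 < colLen lam c ∧
        Krel k K (colLen lam c, c) b) ∨
      (colLen mu c < colLen lam c ∧
        (Krel k K (colLen mu c, c) b ∨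
          ∃ r : ℕ, (r, c) ∈ diagram lam \ diagram mu ∧ Krel k K (r, c) b)))

def Aset (k K : ℕ) (lam mu : ℕ → ℕ) : Set (ℕ × ℕ) :=
  {b | b ∈ diagram mu \ diagram lam ∧ k < b.2 ∧ ¬ Mentioned k K lam mu b}

def Near (b b' : ℕ × ℕ) : Prop :=
  b.1 ≤ b'.1 + 1 ∧ b'.1 ≤ b.1 + 1 ∧ b.2 ≤ b'.2 + 1 ∧ b'.2 ≤ b.2 + 1

noncomputable def Ncomp (k K : ℕ) (lam mu : ℕ → ℕ) : ℕ :=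
  Nat.card (Quot fun a b : Aset k K lam mu => Near a.1 b.1)

/-- `λ` has positive type: some part equals `k`. -/
def PosType (k : ℕ) (f : ℕ → ℕ) : Prop := ∃ r : ℕ, 1 ≤ r ∧ f r = k

/-- `N̂(λ,μ)`: `N(λ,μ)+1` if `λ` has positive type and `μ` does not, and
`N(λ,μ)` otherwise. -/
noncomputable def Nhat (k K : ℕ) (lam mu : ℕ → ℕ) : ℕ :=
  letI : Decidable (PosType k lam ∧ ¬ PosType k mu) :=
    Classical.propDecidable _
  Ncomp k K lam mu + (if PosType k lam ∧ ¬ PosType k mu then 1 else 0)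

/-- `m' = ℓ_k(λ) + 1`, the first row of `λ` with `λ_{m'} ≤ k`. -/
noncomputable def mrow (k : ℕ) (lam : ℕ → ℕ) : ℕ :=
  {i : ℕ | 1 ≤ i ∧ k < lam i}.ncard + 1

/-- the augmented set `𝔸̂`. -/
def Ahat (k K : ℕ) (lam mu : ℕ → ℕ) : Set (ℕ × ℕ) :=
  Aset k K lam mu ∪
    {b | lam (mrow k lam) = k ∧ k < mu (mrow k lam) ∧ b = (mrow k lam, k)}

/-- `b` is a distinguished box of `𝔸̂`: the box directly to its left does not
lie in `𝔸̂`. -/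
def Distinguished (k K : ℕ) (lam mu : ℕ → ℕ) (b : ℕ × ℕ) : Prop :=
  b ∈ Ahat k K lam mu ∧ (b.1, b.2 - 1) ∉ Ahat k K lam mu

/-- connectivity within `𝔸̂`. -/
def Conn (k K : ℕ) (lam mu : ℕ → ℕ) (b b' : ℕ × ℕ) : Prop :=
  Relation.ReflTransGen
    (fun x y => x ∈ Ahat k K lam mu ∧ y ∈ Ahat k K lam mu ∧ Near x y) b b'

/-- `b` is an optional distinguished box: it is the rightmost distinguished box
in its connected component of `𝔸̂`. -/
def Optional (k K : ℕ) (lam mu : ℕ → ℕ) (b : ℕ × ℕ) : Prop :=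
  Distinguished k K lam mu b ∧
    ∀ b' : ℕ × ℕ, Conn k K lam mu b b' → Distinguished k K lam mu b' →
      b'.2 ≤ b.2

end Stmt19

namespace Stmt19Aux
open Stmt19

lemma near_symm {x y : ℕ × ℕ} (h : Near x y) : Near y x :=
  ⟨h.2.1, h.1, h.2.2.2, h.2.2.1⟩

variable {S : Set (ℕ × ℕ)}

lemma step_symm : Symmetric (fun x y : ℕ × ℕ => x ∈ S ∧ y ∈ S ∧ Near x y) :=
  fun _ _ h => ⟨h.2.1, h.1, near_symm h.2.2⟩

lemma eqvGen_to_rtg {a b : S} (h : Relation.EqvGen (fun a b : S => Near a.1 b.1) a b) :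
    Relation.ReflTransGen (fun a b : S => Near a.1 b.1) a b := by
  induction h with
  | rel x y h => exact Relation.ReflTransGen.single h
  | refl x => exact .refl
  | symm x y h ih =>
      exact (@Relation.ReflTransGen.stdSymm _ _ ⟨fun u v huv => near_symm huv⟩).symm _ _ ih
  | trans x y z h1 h2 ih1 ih2 => exact ih1.trans ih2

lemma rtg_down {a b : S} (h : Relation.ReflTransGen (fun a b : S => Near a.1 b.1) a b) :
    Relation.ReflTransGen (fun x y : ℕ × ℕ => x ∈ S ∧ y ∈ S ∧ Near x y) a.1 b.1 := by
  induction h with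
  | refl => exact .refl
  | @tail x y h1 h2 ih => exact ih.tail ⟨x.2, y.2, h2⟩

lemma rtg_up {a b : ℕ × ℕ} (ha : a ∈ S)
    (h : Relation.ReflTransGen (fun x y : ℕ × ℕ => x ∈ S ∧ y ∈ S ∧ Near x y) a b) :
    ∃ hb : b ∈ S,
      Relation.ReflTransGen (fun a b : S => Near a.1 b.1) ⟨a, ha⟩ ⟨b, hb⟩ := by
  induction h with
  | refl => exact ⟨ha, .refl⟩
  | @tail x y h1 h2 ih =>
      obtain ⟨hx, hr⟩ := ih
      exact ⟨h2.2.1, hr.tail h2.2.2⟩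

lemma rtg_quot {u v : S} (h : Relation.ReflTransGen (fun a b : S => Near a.1 b.1) u v) :
    Quot.mk (fun a b : S => Near a.1 b.1) u = Quot.mk _ v := by
  induction h with
  | refl => rfl
  | tail h1 h2 ih => exact ih.trans (Quot.sound h2)

lemma genA (S : Set (ℕ × ℕ)) (hfin : S.Finite)
    (huniq : ∀ a ∈ S, ∀ b ∈ S, a.2 = b.2 → a = b)
    (hpos : ∀ b ∈ S, 1 ≤ b.2) :
    Nat.card (Quot fun a b : S => Near a.1 b.1) =
      {b : ℕ × ℕ | (b ∈ S ∧ (b.1, b.2 - 1) ∉ S) ∧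
        ∀ b' : ℕ × ℕ,
          Relation.ReflTransGen (fun x y => x ∈ S ∧ y ∈ S ∧ Near x y) b b' →
          (b' ∈ S ∧ (b'.1, b'.2 - 1) ∉ S) → b'.2 ≤ b.2}.ncard := by
  classical
  set stp := fun x y : ℕ × ℕ => x ∈ S ∧ y ∈ S ∧ Near x y with hstp
  set Opt : Set (ℕ × ℕ) := {b : ℕ × ℕ | (b ∈ S ∧ (b.1, b.2 - 1) ∉ S) ∧
      ∀ b' : ℕ × ℕ, Relation.ReflTransGen stp b b' →
        (b' ∈ S ∧ (b'.1, b'.2 - 1) ∉ S) → b'.2 ≤ b.2} with hOpt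
  have hmem : ∀ b ∈ Opt, b ∈ S := fun b hb => hb.1.1
  set f : Opt → Quot (fun a b : S => Near a.1 b.1) :=
    fun b => Quot.mk _ ⟨b.1, hmem b.1 b.2⟩ with hf
  have hinj : Function.Injective f := by
    rintro ⟨b, hb⟩ ⟨b', hb'⟩ hfeq
    have h1 : Relation.ReflTransGen stp b b' := by
      have := eqvGen_to_rtg (Quot.eq.mp hfeq)
      exact rtg_down this
    have h2 : Relation.ReflTransGen stp b' b :=
      (@Relation.ReflTransGen.stdSymm _ _ ⟨fun _ _ h => step_symm h⟩).symm _ _ h1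
    have hle1 : b'.2 ≤ b.2 := hb.2 b' h1 hb'.1
    have hle2 : b.2 ≤ b'.2 := hb'.2 b h2 hb.1
    exact Subtype.ext (huniq b hb.1.1 b' hb'.1.1 (le_antisymm hle2 hle1))
  have hsurj : Function.Surjective f := by
    intro q
    obtain ⟨a, rfl⟩ := Quot.exists_rep q
    set T : Set (ℕ × ℕ) := {x | Relation.ReflTransGen stp a.1 x} with hT
    have hTS : ∀ x ∈ T, x ∈ S := by
      intro x hx
      rcases (Relation.ReflTransGen.cases_tail hx) with h | ⟨c, _, hcx⟩
      · exact h ▸ a.2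
      · exact hcx.2.1
    have hTfin : T.Finite := hfin.subset hTS
    have haT : a.1 ∈ T := Relation.ReflTransGen.refl
    -- minimal-column element is distinguished
    obtain ⟨x₀, hx₀T, hx₀min⟩ :=
      Set.exists_min_image T (fun x => x.2) hTfin ⟨a.1, haT⟩
    have hx₀S : x₀ ∈ S := hTS _ hx₀T
    have hx₀d : (x₀.1, x₀.2 - 1) ∉ S := by
      intro hcontra
      have hnear : Near x₀ (x₀.1, x₀.2 - 1) := by
        refine ⟨by omega, by omega, ?_, ?_⟩ <;> simp <;> omega
      have : (x₀.1, x₀.2 - 1) ∈ T := hx₀T.tail ⟨hx₀S, hcontra, hnear⟩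
      have := hx₀min _ this
      have := hpos _ hx₀S
      dsimp only at *
      omega
    set D : Set (ℕ × ℕ) := {x | x ∈ T ∧ (x.1, x.2 - 1) ∉ S} with hD
    have hDfin : D.Finite := hTfin.subset fun x hx => hx.1
    obtain ⟨y, hyD, hymax⟩ :=
      Set.exists_max_image D (fun x => x.2) hDfin ⟨x₀, hx₀T, hx₀d⟩
    have hyS : y ∈ S := hTS _ hyD.1
    have hyOpt : y ∈ Opt := by
      refine ⟨⟨hyS, hyD.2⟩, ?_⟩
      intro b' hconn hdist
      have hb'T : b' ∈ T := (hyD.1).trans hconn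
      exact hymax b' ⟨hb'T, hdist.2⟩
    refine ⟨⟨y, hyOpt⟩, ?_⟩
    obtain ⟨hyS', hrt⟩ := rtg_up a.2 hyD.1
    have : Quot.mk (fun a b : S => Near a.1 b.1) ⟨a.1, a.2⟩ = Quot.mk _ ⟨y, hyS'⟩ :=
      rtg_quot hrt
    simp only [hf]
    rw [show (⟨y, hmem y hyOpt⟩ : S) = ⟨y, hyS'⟩ from rfl, ← this]
  rw [← Nat.card_coe_set_eq]
  exact (Nat.card_eq_of_bijective f ⟨hinj, hsurj⟩).symm

end Stmt19Aux

namespace Stmt19Aux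
open Stmt19

lemma near_symm' {x y : ℕ × ℕ} (h : Near x y) : Near y x :=
  ⟨h.2.1, h.1, h.2.2.2, h.2.2.1⟩

/-- adding an isolated box increases the number of components by one -/
lemma iso2 (S : Set (ℕ × ℕ)) (hfin : S.Finite) (B : ℕ × ℕ) (hB : B ∉ S)
    (hiso : ∀ x ∈ S, ¬ Near B x) :
    Nat.card (Quot fun a b : (insert B S : Set (ℕ × ℕ)) => Near a.1 b.1) =
      Nat.card (Quot fun a b : S => Near a.1 b.1) + 1 := by
  classical
  haveI : Finite S := hfin.to_subtype
  set r : S → S → Prop := fun a b => Near a.1 b.1 with hr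
  set T : Set (ℕ × ℕ) := insert B S with hT
  set r' : T → T → Prop := fun a b => Near a.1 b.1 with hr'
  set φ : T → Quot r ⊕ Unit := fun x =>
    if hx : x.1 ∈ S then Sum.inl (Quot.mk r ⟨x.1, hx⟩) else Sum.inr () with hφ
  have hφpos : ∀ (x : T) (hx : x.1 ∈ S), φ x = Sum.inl (Quot.mk r ⟨x.1, hx⟩) := by
    intro x hx; simp only [hφ]; exact dif_pos hx
  have hφneg : ∀ (x : T), x.1 ∉ S → φ x = Sum.inr () := by
    intro x hx; simp only [hφ]; exact dif_neg hx
  have hresp : ∀ a b : T, r' a b → φ a = φ b := by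
    rintro ⟨a, ha⟩ ⟨b, hb⟩ hab
    by_cases haS : a ∈ S <;> by_cases hbS : b ∈ S
    · rw [hφpos _ haS, hφpos _ hbS]
      exact congrArg Sum.inl (Quot.sound hab)
    · exact absurd (near_symm' ((hb.resolve_right hbS) ▸ hab)) (hiso a haS)
    · exact absurd ((ha.resolve_right haS) ▸ hab) (hiso b hbS)
    · rw [hφneg _ haS, hφneg _ hbS]
  have hequiv : Quot r' ≃ (Quot r ⊕ Unit) := by
    refine ⟨Quot.lift φ hresp,
      fun q => Sum.elim
        (Quot.lift (fun x : S => Quot.mk r' ⟨x.1, Set.mem_insert_of_mem B x.2⟩)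
          (fun a b hab => Quot.sound hab))
        (fun _ => Quot.mk r' ⟨B, Set.mem_insert B S⟩) q, ?_, ?_⟩
    · intro q
      induction q using Quot.ind with
      | _ x =>
        show Sum.elim _ _ (φ x) = Quot.mk r' x
        by_cases hx : x.1 ∈ S
        · rw [hφpos _ hx]; rfl
        · rw [hφneg _ hx]
          exact congrArg _ (Subtype.ext ((x.2.resolve_right hx).symm))
    · rintro (q | u)
      · induction q using Quot.ind with
        | _ x =>
          show φ ⟨x.1, Set.mem_insert_of_mem B x.2⟩ = Sum.inl (Quot.mk r x)
          rw [hφpos _ x.2]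
      · show φ ⟨B, Set.mem_insert B S⟩ = Sum.inr u
        rw [hφneg _ hB]
  rw [Nat.card_congr hequiv, Nat.card_sum]
  simp

/-- adding a box with a unique neighbour keeps the number of components -/
lemma iso3 (S : Set (ℕ × ℕ)) (B c : ℕ × ℕ) (hB : B ∉ S) (hc : c ∈ S)
    (hnear : Near B c) (huniq : ∀ x ∈ S, Near B x → x = c) :
    Nat.card (Quot fun a b : (insert B S : Set (ℕ × ℕ)) => Near a.1 b.1) =
      Nat.card (Quot fun a b : S => Near a.1 b.1) := by
  classical
  set r : S → S → Prop := fun a b => Near a.1 b.1 with hr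
  set T : Set (ℕ × ℕ) := insert B S with hT
  set r' : T → T → Prop := fun a b => Near a.1 b.1 with hr'
  set φ : T → Quot r := fun x =>
    if hx : x.1 ∈ S then Quot.mk r ⟨x.1, hx⟩ else Quot.mk r ⟨c, hc⟩ with hφ
  have hφpos : ∀ (x : T) (hx : x.1 ∈ S), φ x = Quot.mk r ⟨x.1, hx⟩ := by
    intro x hx; simp only [hφ]; exact dif_pos hx
  have hφneg : ∀ (x : T), x.1 ∉ S → φ x = Quot.mk r ⟨c, hc⟩ := by
    intro x hx; simp only [hφ]; exact dif_neg hx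
  have hresp : ∀ a b : T, r' a b → φ a = φ b := by
    rintro ⟨a, ha⟩ ⟨b, hb⟩ hab
    by_cases haS : a ∈ S <;> by_cases hbS : b ∈ S
    · rw [hφpos _ haS, hφpos _ hbS]
      exact Quot.sound hab
    · rw [hφpos _ haS, hφneg _ hbS]
      exact congrArg _ (Subtype.ext (huniq a haS (near_symm' ((hb.resolve_right hbS) ▸ hab))))
    · rw [hφneg _ haS, hφpos _ hbS]
      exact (congrArg _ (Subtype.ext (huniq b hbS ((ha.resolve_right haS) ▸ hab)))).symm
    · rw [hφneg _ haS, hφneg _ hbS]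
  have hequiv : Quot r' ≃ Quot r := by
    refine ⟨Quot.lift φ hresp,
      Quot.lift (fun x : S => Quot.mk r' ⟨x.1, Set.mem_insert_of_mem B x.2⟩)
        (fun a b hab => Quot.sound hab), ?_, ?_⟩
    · intro q
      induction q using Quot.ind with
      | _ x =>
        show Quot.lift _ _ (φ x) = Quot.mk r' x
        by_cases hx : x.1 ∈ S
        · rw [hφpos _ hx]
        · rw [hφneg _ hx]
          refine Quot.sound ?_
          show Near c x.1
          rw [x.2.resolve_right hx]
          exact near_symm' hnear
    · intro q
      induction q using Quot.ind with
      | _ x =>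
        show φ ⟨x.1, Set.mem_insert_of_mem B x.2⟩ = Quot.mk r x
        rw [hφpos _ x.2]
  exact Nat.card_congr hequiv

end Stmt19Aux

namespace Stmt19Aux
open Stmt19

/-- the basic interval lemma for weakly decreasing vanishing sequences -/
lemma ivl (f : ℕ → ℕ) (hmono : ∀ i j : ℕ, 1 ≤ i → i ≤ j → f j ≤ f i)
    (hvan : ∃ M : ℕ, ∀ i : ℕ, M ≤ i → f i = 0) (c : ℕ) (hc : 1 ≤ c) :
    (∀ r, 1 ≤ r → r ≤ {r : ℕ | 1 ≤ r ∧ c ≤ f r}.ncard → c ≤ f r) ∧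
      (∀ r, {r : ℕ | 1 ≤ r ∧ c ≤ f r}.ncard < r → f r < c) := by
  obtain ⟨M, hM⟩ := hvan
  set A : Set ℕ := {r : ℕ | 1 ≤ r ∧ c ≤ f r} with hA
  have hsub : A ⊆ Set.Icc 1 M := by
    rintro r ⟨h1, h2⟩
    refine ⟨h1, ?_⟩
    by_contra h
    push_neg at h
    have := hM r (le_of_lt h)
    omega
  have hfin : A.Finite := (Set.finite_Icc 1 M).subset hsub
  rcases Set.eq_empty_or_nonempty A with hempty | hne
  · rw [hempty]
    simp only [Set.ncard_empty]
    constructor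
    · intro r h1 h2; omega
    · intro r hr
      have : r ∉ A := by rw [hempty]; exact Set.notMem_empty r
      rw [hA] at this
      simp only [Set.mem_setOf_eq, not_and] at this
      have := this (by omega)
      omega
  · obtain ⟨L, hLA, hLmax⟩ := Set.exists_max_image A id hfin hne
    have hAI : A = Set.Icc 1 L := by
      apply subset_antisymm
      · exact fun x hx => ⟨hx.1, hLmax x hx⟩
      · rintro x ⟨h1, h2⟩
        exact ⟨h1, le_trans hLA.2 (hmono x L h1 h2)⟩
    have hcard : A.ncard = L := by
      rw [hAI, ← Finset.coe_Icc, Set.ncard_coe_finset, Nat.card_Icc]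
      omega
    rw [hcard]
    constructor
    · intro r h1 h2
      have : r ∈ A := by rw [hAI]; exact ⟨h1, h2⟩
      exact this.2
    · intro r hr
      have hL1 : 1 ≤ L := hLA.1
      have : r ∉ A := by rw [hAI]; simp; omega
      rw [hA] at this
      simp only [Set.mem_setOf_eq, not_and] at this
      have := this (by omega)
      omega

lemma colLen_spec (f : ℕ → ℕ) (hf : IsPartition f) (c : ℕ) (hc : 1 ≤ c) :
    (∀ r, 1 ≤ r → r ≤ colLen f c → c ≤ f r) ∧
      (∀ r, colLen f c < r → f r < c) :=
  ivl f hf.1 hf.2 c hc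

lemma colLen_ge (f : ℕ → ℕ) (hf : IsPartition f) (c : ℕ) (hc : 1 ≤ c) (L : ℕ)
    (h1 : ∀ r, 1 ≤ r → r ≤ L → c ≤ f r) : L ≤ colLen f c := by
  obtain ⟨hs1, hs2⟩ := colLen_spec f hf c hc
  by_contra h
  push_neg at h
  have h3 := h1 (colLen f c + 1) (by omega) (by omega)
  have h4 := hs2 (colLen f c + 1) (by omega)
  omega

lemma colLen_eq (f : ℕ → ℕ) (hf : IsPartition f) (c : ℕ) (hc : 1 ≤ c) (L : ℕ)
    (h1 : ∀ r, 1 ≤ r → r ≤ L → c ≤ f r) (h2 : f (L + 1) < c) : colLen f c = L := by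
  have hge := colLen_ge f hf c hc L h1
  obtain ⟨hs1, hs2⟩ := colLen_spec f hf c hc
  by_contra h
  have h3 := hs1 (L + 1) (by omega) (by omega)
  omega

lemma mrow_eq (k : ℕ) (lam : ℕ → ℕ) :
    mrow k lam = colLen lam (k + 1) + 1 := by
  have h : {i : ℕ | 1 ≤ i ∧ k < lam i} = {r : ℕ | 1 ≤ r ∧ k + 1 ≤ lam r} := by
    ext i; simp only [Set.mem_setOf_eq]; omega
  unfold mrow colLen
  rw [h]

lemma mrow_pos (k : ℕ) (lam : ℕ → ℕ) : 1 ≤ mrow k lam := by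
  unfold mrow; omega

/-- rows before `m'` have `λ_r > k` -/
lemma lam_gt_of_lt_mrow (k : ℕ) (lam : ℕ → ℕ) (hlam : IsPartition lam)
    (r : ℕ) (h1 : 1 ≤ r) (h2 : r < mrow k lam) : k < lam r := by
  have := (colLen_spec lam hlam (k + 1) (by omega)).1 r h1
    (by rw [mrow_eq] at h2; omega)
  omega

/-- `λ_{m'} ≤ k` -/
lemma lam_mrow_le (k : ℕ) (lam : ℕ → ℕ) (hlam : IsPartition lam) :
    lam (mrow k lam) ≤ k := by
  have := (colLen_spec lam hlam (k + 1) (by omega)).2 (mrow k lam)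
    (by rw [mrow_eq]; omega)
  omega

lemma diagram_finite (f : ℕ → ℕ) (hf : IsPartition f) : (diagram f).Finite := by
  obtain ⟨M, hM⟩ := hf.2
  apply ((Set.finite_Icc 1 M).prod (Set.finite_Icc 1 (f 1))).subset
  rintro ⟨r, c⟩ ⟨h1, h2, h3⟩
  dsimp only at h1 h2 h3
  have hfr : f r ≤ f 1 := hf.1 1 r le_rfl h1
  refine ⟨⟨h1, ?_⟩, h2, by omega⟩
  by_contra h
  push_neg at h
  have := hM r (by omega)
  omega

end Stmt19Aux

namespace Stmt19Aux
open Stmt19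

section Pieri

variable {k : ℕ} {lam mu : ℕ → ℕ}

lemma pieri_mu_lb (harrow : PieriArrow k (2 * k) lam mu) :
    ∀ r, 1 ≤ r → lam r ≤ mu r + 1 := by
  obtain ⟨⟨nu, hnupart, hnulam, hnumu⟩, _, _⟩ := harrow
  intro r hr
  have h1 := (hnulam r hr).2.1
  have h2 := (hnumu r hr).1
  omega

lemma pieri_mu_gt (harrow : PieriArrow k (2 * k) lam mu) :
    ∀ r, 1 ≤ r → k < lam r → lam r ≤ mu r := by
  obtain ⟨⟨nu, hnupart, hnulam, hnumu⟩, _, _⟩ := harrow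
  intro r hr hgt
  obtain ⟨h1, h2, h3⟩ := hnulam r hr
  have h4 := (hnumu r hr).1
  by_cases h : nu r < lam r
  · have := h3 h; omega
  · omega

lemma pieri_skew (harrow : PieriArrow k (2 * k) lam mu) :
    ∀ r, 1 ≤ r → mu (r + 1) ≤ lam r := by
  obtain ⟨⟨nu, hnupart, hnulam, hnumu⟩, _, _⟩ := harrow
  intro r hr
  have h1 := (hnumu r hr).2
  have h2 := (hnulam r hr).1
  omega

/-- the skew diagram `μ∖λ` has at most one box in every column -/
lemma skew_col_uniq (hlam : IsPartition lam)
    (hskew : ∀ r, 1 ≤ r → mu (r + 1) ≤ lam r) :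
    ∀ a ∈ diagram mu \ diagram lam, ∀ b ∈ diagram mu \ diagram lam,
      a.2 = b.2 → a = b := by
  have key : ∀ r r' j : ℕ, 1 ≤ r → r < r' → j ≤ mu r' → lam r < j → False := by
    intro r r' j hr1 hlt hjm hlj
    have e : r' - 1 + 1 = r' := by omega
    have h1 : mu r' ≤ lam (r' - 1) := by
      have h := hskew (r' - 1) (by omega); rwa [e] at h
    have h2 : lam (r' - 1) ≤ lam r := hlam.1 r (r' - 1) hr1 (by omega)
    omega
  have getfacts : ∀ a ∈ diagram mu \ diagram lam,
      1 ≤ a.1 ∧ 1 ≤ a.2 ∧ a.2 ≤ mu a.1 ∧ lam a.1 < a.2 := by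
    rintro ⟨r, j⟩ ⟨⟨h1, h2, h3⟩, hnot⟩
    dsimp only at h1 h2 h3 ⊢
    refine ⟨h1, h2, h3, ?_⟩
    by_contra h
    exact hnot ⟨h1, h2, by dsimp only; omega⟩
  rintro a ha b hb hj
  obtain ⟨a1, a2, a3, a4⟩ := getfacts a ha
  obtain ⟨b1, b2, b3, b4⟩ := getfacts b hb
  rcases lt_trichotomy a.1 b.1 with h | h | h
  · exact absurd (key a.1 b.1 a.2 a1 h (by omega) a4) not_false
  · exact Prod.ext h hj
  · exact absurd (key b.1 a.1 b.2 b1 h (by omega) b4) not_false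

/-- parts of `λ` above `k` decrease strictly -/
lemma lam_strict_dec (hk : 1 ≤ k) (hlam : IsPartition lam) (hlamk : IsKStrict k lam) :
    ∀ r, 1 ≤ r → r < mrow k lam → k + mrow k lam ≤ lam r + r := by
  have main : ∀ d r, 1 ≤ r → r + 1 + d = mrow k lam → k + mrow k lam ≤ lam r + r := by
    intro d
    induction d with
    | zero =>
      intro r hr1 hr2
      have := lam_gt_of_lt_mrow k lam hlam r hr1 (by omega)
      omega
    | succ d ih =>
      intro r hr1 hr2
      have h1 := ih (r + 1) (by omega) (by omega)
      have h2 : k < lam r := lam_gt_of_lt_mrow k lam hlam r hr1 (by omega)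
      have h3 : lam r ≠ lam (r + 1) := hlamk r (r + 1) hr1 (by omega) h2
      have h4 : lam (r + 1) ≤ lam r := hlam.1 r (r + 1) hr1 (by omega)
      omega
  intro r hr1 hr2
  exact main (mrow k lam - r - 1) r hr1 (by omega)

/-- `λ` cannot lose its positive type by shrinking in column `k` -/
lemma no_type_drop (hk : 1 ≤ k) (hlam : IsPartition lam) (hmu : IsPartition mu)
    (hlamk : IsKStrict k lam) (harrow : PieriArrow k (2 * k) lam mu)
    (hposl : lam (mrow k lam) = k) (hmulow : mu (mrow k lam) < k) : False := by
  set m' := mrow k lam with hm'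
  have hm1 : 1 ≤ m' := mrow_pos k lam
  have hcmu : colLen mu k = m' - 1 := by
    apply colLen_eq mu hmu k hk
    · intro r h1 h2
      have hgt := lam_gt_of_lt_mrow k lam hlam r h1 (by omega)
      have := pieri_mu_gt harrow r h1 hgt
      omega
    · have h : m' - 1 + 1 = m' := by omega
      rw [h]
      omega
  have hclam : m' ≤ colLen lam k := by
    apply colLen_ge lam hlam k hk
    intro r h1 h2
    rcases eq_or_lt_of_le h2 with h | h
    · rw [h, hposl]
    · have := lam_gt_of_lt_mrow k lam hlam r h1 (by omega)
      omega
  obtain ⟨R, hbox, hlast⟩ := harrow.2.2 k hk le_rfl (by omega)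
  obtain ⟨b', ⟨hb'mem, hb'k⟩, _⟩ := hlast.1
  obtain ⟨⟨hr1, hc1, hcm⟩, hnot⟩ := hb'mem
  have hlj : lam b'.1 < b'.2 := by
    by_contra h
    exact hnot ⟨hr1, hc1, by omega⟩
  obtain ⟨_, hk2, hk3⟩ := hb'k
  dsimp at hk2 hk3
  rw [hcmu] at hk3
  have hblt : b'.1 < m' := by omega
  have := lam_strict_dec hk hlam hlamk b'.1 hr1 hblt
  omega
lemma mrow_ge_one' : 1 ≤ mrow k lam := mrow_pos k lam

/-- rows `1..m'` of `μ` exceed `k` (case 2 hypotheses) -/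
lemma mu_gt_of_le_mrow (hlam : IsPartition lam) (harrow : PieriArrow k (2 * k) lam mu)
    (h2 : k < mu (mrow k lam)) :
    ∀ r, 1 ≤ r → r ≤ mrow k lam → k < mu r := by
  intro r hr1 hr2
  rcases eq_or_lt_of_le hr2 with h | h
  · rw [h]; exact h2
  · have hgt := lam_gt_of_lt_mrow k lam hlam r hr1 h
    have := pieri_mu_gt harrow r hr1 hgt
    omega

lemma mu_succ_le (harrow : PieriArrow k (2 * k) lam mu)
    (h1 : lam (mrow k lam) = k) : mu (mrow k lam + 1) ≤ k := by
  have := pieri_skew harrow (mrow k lam) (mrow_pos k lam)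
  omega

lemma posmu_iff (hlam : IsPartition lam) (hmu : IsPartition mu)
    (harrow : PieriArrow k (2 * k) lam mu)
    (h1 : lam (mrow k lam) = k) (h2 : k < mu (mrow k lam)) :
    PosType k mu ↔ mu (mrow k lam + 1) = k := by
  constructor
  · rintro ⟨r, hr1, hrk⟩
    have hge : mrow k lam + 1 ≤ r := by
      by_contra h
      push_neg at h
      have := mu_gt_of_le_mrow hlam harrow h2 r hr1 (by omega)
      omega
    have hle := mu_succ_le harrow h1
    have := hmu.1 (mrow k lam + 1) r (by omega) hge
    omega
  · intro h
    exact ⟨mrow k lam + 1, by omega, h⟩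

/-- the box `(m', k+1)` belongs to `μ∖λ` in case 2 -/
lemma boxA (h1 : lam (mrow k lam) = k) (h2 : k < mu (mrow k lam)) :
    ((mrow k lam, k + 1) : ℕ × ℕ) ∈ diagram mu \ diagram lam := by
  constructor
  · exact ⟨mrow_pos k lam, by omega, by dsimp only; omega⟩
  · rintro ⟨_, _, h⟩
    dsimp only at h
    omega

/-- case 2a: `(m', k+1)` is mentioned -/
lemma mentioned_2a (hk : 1 ≤ k) (hlam : IsPartition lam) (hmu : IsPartition mu)
    (harrow : PieriArrow k (2 * k) lam mu)
    (h1 : lam (mrow k lam) = k) (h2 : k < mu (mrow k lam))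
    (hnp : mu (mrow k lam + 1) < k) :
    Mentioned k (2 * k) lam mu (mrow k lam, k + 1) := by
  set m' := mrow k lam with hm'
  have hm1 : 1 ≤ m' := mrow_pos k lam
  have hcmu : colLen mu k = m' := by
    apply colLen_eq mu hmu k hk
    · intro r hr1 hr2
      have := mu_gt_of_le_mrow hlam harrow h2 r hr1 hr2
      omega
    · exact hnp
  have hclam : m' ≤ colLen lam k := by
    apply colLen_ge lam hlam k hk
    intro r hr1 hr2
    rcases eq_or_lt_of_le hr2 with h | h
    · rw [h, h1]
    · have := lam_gt_of_lt_mrow k lam hlam r hr1 h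
      omega
  by_cases hL : colLen lam k = m'
  · refine ⟨k, hk, le_rfl, Or.inl ⟨by rw [hcmu, hL], by omega, ?_⟩⟩
    rw [hL]
    exact ⟨le_rfl, by omega, by dsimp only; omega⟩
  · refine ⟨k, hk, le_rfl, Or.inr ⟨by omega, Or.inl ?_⟩⟩
    rw [hcmu]
    exact ⟨le_rfl, by omega, by dsimp only; omega⟩

/-- case 2b: `(m', k+1)` is not mentioned -/
lemma notmentioned_2b (hk : 1 ≤ k) (hlam : IsPartition lam) (hmu : IsPartition mu)
    (harrow : PieriArrow k (2 * k) lam mu)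
    (h1 : lam (mrow k lam) = k) (h2 : k < mu (mrow k lam))
    (hp : mu (mrow k lam + 1) = k) :
    ¬ Mentioned k (2 * k) lam mu (mrow k lam, k + 1) := by
  set m' := mrow k lam with hm'
  have hm1 : 1 ≤ m' := mrow_pos k lam
  have hmugt : ∀ r, 1 ≤ r → r ≤ m' → k < mu r := mu_gt_of_le_mrow hlam harrow h2
  have hcmu : ∀ c, 1 ≤ c → c ≤ k → m' + 1 ≤ colLen mu c := by
    intro c hc1 hck
    apply colLen_ge mu hmu c hc1
    intro r hr1 hr2
    rcases eq_or_lt_of_le hr2 with h | h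
    · rw [h, hp]; omega
    · have := hmugt r hr1 (by omega)
      omega
  have hclam : ∀ c, 1 ≤ c → c ≤ k → m' ≤ colLen lam c := by
    intro c hc1 hck
    apply colLen_ge lam hlam c hc1
    intro r hr1 hr2
    rcases eq_or_lt_of_le hr2 with h | h
    · rw [h, h1]; omega
    · have := lam_gt_of_lt_mrow k lam hlam r hr1 h
      omega
  rintro ⟨c, hc1, hck, hd⟩
  rcases hd with ⟨heq, hpos0, hkrel⟩ | ⟨hlt, hkk⟩
  · obtain ⟨hx1, hx2, hx3⟩ := hkrel
    dsimp only at hx1 hx2 hx3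
    have hg1 := hclam c hc1 hck
    have hg2 := hcmu c hc1 hck
    omega
  · rcases hkk with hkrel | ⟨r, hrmem, hkrel⟩
    · obtain ⟨hx1, hx2, hx3⟩ := hkrel
      dsimp only at hx1 hx2 hx3
      have hg1 := hclam c hc1 hck
      have hg2 := hcmu c hc1 hck
      omega
    · obtain ⟨hx1, hx2, hx3⟩ := hkrel
      dsimp only at hx1 hx2 hx3
      obtain ⟨⟨hrr1, hrc1, hrc2⟩, hrnot⟩ := hrmem
      dsimp only at hrr1 hrc1 hrc2
      have hrle : r ≤ m' := by omega
      have hmur : c ≤ mu r := by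
        have := hmugt r hrr1 hrle
        omega
      exact hrnot ⟨hrr1, hrc1, hmur⟩

end Pieri

end Stmt19Aux




open Stmt19 in
theorem stmt19 (k : ℕ) (hk : 1 ≤ k) (m n : ℕ) (hm : m + k = n + 1)
    (lam mu : ℕ → ℕ)
    (hlam : IsPartition lam) (hmu : IsPartition mu)
    (hlamk : IsKStrict k lam) (hmuk : IsKStrict k mu)
    (hrect_len : ∀ r : ℕ, m < r → lam r = 0)
    (hrect_wid : ∀ r : ℕ, lam r ≤ n + k)
    (harrow : PieriArrow k (2 * k) lam mu) :
    Nhat k (2 * k) lam mu = {b : ℕ × ℕ | Optional k (2 * k) lam mu b}.ncard := by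
  classical
  have hm1 : 1 ≤ mrow k lam := Stmt19Aux.mrow_pos k lam
  have hskew := Stmt19Aux.pieri_skew harrow
  have hfinA : (Aset k (2 * k) lam mu).Finite :=
    (Stmt19Aux.diagram_finite mu hmu).subset (fun b hb => hb.1.1)
  have hfinAhat : (Ahat k (2 * k) lam mu).Finite :=
    hfinA.union ((Set.finite_singleton ((mrow k lam, k))).subset (fun b hb => hb.2.2))
  have huniq : ∀ a ∈ Ahat k (2 * k) lam mu, ∀ b ∈ Ahat k (2 * k) lam mu,
      a.2 = b.2 → a = b := by
    have hcu := Stmt19Aux.skew_col_uniq hlam hskew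
    rintro a (ha | ⟨ha1, ha2, ha3⟩) b (hb | ⟨hb1, hb2, hb3⟩) hab
    · exact hcu a ha.1 b hb.1 hab
    · exfalso
      have := ha.2.1
      rw [hb3] at hab
      dsimp at hab
      omega
    · exfalso
      have := hb.2.1
      rw [ha3] at hab
      dsimp at hab
      omega
    · rw [ha3, hb3]
  have hpos : ∀ b ∈ Ahat k (2 * k) lam mu, 1 ≤ b.2 := by
    rintro b (hb | ⟨_, _, hb3⟩)
    · have := hb.2.1; omega
    · rw [hb3]; exact hk
  have hopt : {b : ℕ × ℕ | Optional k (2 * k) lam mu b}.ncard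
      = Nat.card (Quot fun a b : (Ahat k (2 * k) lam mu) => Near a.1 b.1) :=
    (Stmt19Aux.genA _ hfinAhat huniq hpos).symm
  rw [hopt]
  unfold Nhat
  by_cases hcase : lam (mrow k lam) = k ∧ k < mu (mrow k lam)
  · -- the extra box is added
    have hA : Ahat k (2 * k) lam mu
        = insert (mrow k lam, k) (Aset k (2 * k) lam mu) := by
      ext b
      simp only [Ahat, Set.mem_union, Set.mem_setOf_eq, Set.mem_insert_iff]
      constructor
      · rintro (h | ⟨_, _, h3⟩)
        · exact Or.inr h
        · exact Or.inl h3
      · rintro (h | h)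
        · exact Or.inr ⟨hcase.1, hcase.2, h⟩
        · exact Or.inl h
    rw [hA]
    have hBnot : (mrow k lam, k) ∉ Aset k (2 * k) lam mu := by
      intro h
      have := h.2.1
      dsimp at this
      omega
    have hposl : PosType k lam := ⟨mrow k lam, hm1, hcase.1⟩
    by_cases hpm : PosType k mu
    · rw [if_neg (fun hcon => hcon.2 hpm), add_zero]
      have hp : mu (mrow k lam + 1) = k :=
        (Stmt19Aux.posmu_iff hlam hmu harrow hcase.1 hcase.2).1 hpm
      have hmem : (mrow k lam, k + 1) ∈ Aset k (2 * k) lam mu :=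
        ⟨Stmt19Aux.boxA hcase.1 hcase.2, by dsimp; omega,
          Stmt19Aux.notmentioned_2b hk hlam hmu harrow hcase.1 hcase.2 hp⟩
      have hnear : Near (mrow k lam, k) (mrow k lam, k + 1) := by
        unfold Near; dsimp; omega
      have hnb : ∀ x ∈ Aset k (2 * k) lam mu,
          Near (mrow k lam, k) x → x = (mrow k lam, k + 1) := by
        intro x hx hnx
        apply Stmt19Aux.skew_col_uniq hlam hskew x hx.1
          (mrow k lam, k + 1) (Stmt19Aux.boxA hcase.1 hcase.2)
        have h1 := hx.2.1
        have h2 := hnx.2.2.2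
        dsimp at h2 ⊢
        omega
      unfold Ncomp
      exact (Stmt19Aux.iso3 _ _ _ hBnot hmem hnear hnb).symm
    · rw [if_pos ⟨hposl, hpm⟩]
      have hnp : mu (mrow k lam + 1) < k := by
        have h1 := Stmt19Aux.mu_succ_le harrow hcase.1
        have h2 : mu (mrow k lam + 1) ≠ k := fun h =>
          hpm ((Stmt19Aux.posmu_iff hlam hmu harrow hcase.1 hcase.2).2 h)
        omega
      have hment := Stmt19Aux.mentioned_2a hk hlam hmu harrow hcase.1 hcase.2 hnp
      have hiso : ∀ x ∈ Aset k (2 * k) lam mu, ¬ Near (mrow k lam, k) x := by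
        intro x hx hnx
        have hxeq : x = (mrow k lam, k + 1) := by
          apply Stmt19Aux.skew_col_uniq hlam hskew x hx.1
            (mrow k lam, k + 1) (Stmt19Aux.boxA hcase.1 hcase.2)
          have h1 := hx.2.1
          have h2 := hnx.2.2.2
          dsimp at h2 ⊢
          omega
        exact hx.2.2 (by rw [hxeq]; exact hment)
      unfold Ncomp
      exact (Stmt19Aux.iso2 _ hfinA _ hBnot hiso).symm
  · -- no extra box
    have hA : Ahat k (2 * k) lam mu = Aset k (2 * k) lam mu := by
      ext b
      simp only [Ahat, Set.mem_union, Set.mem_setOf_eq]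
      constructor
      · rintro (h | ⟨h1, h2, _⟩)
        · exact h
        · exact absurd ⟨h1, h2⟩ hcase
      · exact fun h => Or.inl h
    rw [hA]
    have hind : ¬ (PosType k lam ∧ ¬ PosType k mu) := by
      rintro ⟨hpl, hpm⟩
      have hlm : lam (mrow k lam) = k := by
        obtain ⟨r, hr1, hrk⟩ := hpl
        have hge : mrow k lam ≤ r := by
          by_contra h
          push_neg at h
          have := Stmt19Aux.lam_gt_of_lt_mrow k lam hlam r hr1 h
          omega
        have h1 := hlam.1 (mrow k lam) r hm1 hge
        have h2 := Stmt19Aux.lam_mrow_le k lam hlam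
        omega
      have hmulek : ¬ k < mu (mrow k lam) := fun h => hcase ⟨hlm, h⟩
      have hmune : mu (mrow k lam) ≠ k := fun h => hpm ⟨mrow k lam, hm1, h⟩
      exact absurd (Stmt19Aux.no_type_drop hk hlam hmu hlamk harrow hlm (by omega)) not_false
    rw [if_neg hind, add_zero]
    rfl
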